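/- Let G be a symmetric n×n integer matrix with det G ≠ 0, and suppose that some diagonal entry of G is odd (equivalently, xᵀGx is odd for some x ∈ ℤⁿ, i.e. the lattice is odd). Then there exist a matrix M ∈ Mₙ(ℤ) with odd determinant, a natural number n₂ with 0 ≤ n₂ ≤ n, a diagonal n₂×n₂ integer matrix G₁ all of whose diagonal entries are odd, and a symmetric (n−n₂)×(n−n₂) integer matrix G₂, such that MᵀGM is the block diagonal matrix with diagonal blocks G₁ and 2·G₂. -/

import Mathlib

open Matrix Finset

namespace OddLatticeAux

variable {n m : ℕ}

lemma sum_one (c : Fin m) (f g : Fin m → ℤ) (hg : ∀ l, l ≠ c → g l = 0) :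
    ∑ l, f l * g l = f c * g c :=
  Finset.sum_eq_single c (fun l _ hl => by rw [hg l hl, mul_zero]) (by simp)

lemma sum_one' (c : Fin m) (f g : Fin m → ℤ) (hf : ∀ l, l ≠ c → f l = 0) :
    ∑ l, f l * g l = f c * g c :=
  Finset.sum_eq_single c (fun l _ hl => by rw [hf l hl, zero_mul]) (by simp)

lemma sum_two (c d : Fin m) (h : c ≠ d) (f g : Fin m → ℤ)
    (hg : ∀ l, l ≠ c → l ≠ d → g l = 0) :
    ∑ l, f l * g l = f c * g c + f d * g d := by
  have hsub : ({c, d} : Finset (Fin m)) ⊆ Finset.univ := Finset.subset_univ _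
  rw [← Finset.sum_subset hsub (fun x _ hx => ?_), Finset.sum_pair h]
  have hx1 : x ≠ c := fun hc => hx (by simp [hc])
  have hx2 : x ≠ d := fun hc => hx (by simp [hc])
  rw [hg x hx1 hx2, mul_zero]

lemma sum_two' (c d : Fin m) (h : c ≠ d) (f g : Fin m → ℤ)
    (hf : ∀ l, l ≠ c → l ≠ d → f l = 0) :
    ∑ l, f l * g l = f c * g c + f d * g d := by
  have hsub : ({c, d} : Finset (Fin m)) ⊆ Finset.univ := Finset.subset_univ _
  rw [← Finset.sum_subset hsub (fun x _ hx => ?_), Finset.sum_pair h]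
  have hx1 : x ≠ c := fun hc => hx (by simp [hc])
  have hx2 : x ≠ d := fun hc => hx (by simp [hc])
  rw [hf x hx1 hx2, zero_mul]

def Cond (C : Matrix (Fin n) (Fin n) ℤ) (p : Fin n → Bool) : Prop :=
  (∀ i, p i = true → Odd (C i i)) ∧
  (∀ i j, i ≠ j → (p i = true ∨ p j = true) → C i j = 0) ∧
  (∀ i j, p i = false → p j = false → (2:ℤ) ∣ C i j)

def R (A : Matrix (Fin n) (Fin n) ℤ) : Prop :=
  ∃ (M : Matrix (Fin n) (Fin n) ℤ) (p : Fin n → Bool), Odd M.det ∧ Cond (Mᵀ * A * M) p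

lemma R_comp {A N : Matrix (Fin n) (Fin n) ℤ} (hN : Odd N.det)
    (h : R (Nᵀ * A * N)) : R A := by
  obtain ⟨M, p, hM, hC⟩ := h
  refine ⟨N * M, p, by rw [Matrix.det_mul]; exact hN.mul hM, ?_⟩
  have e : (N * M)ᵀ * A * (N * M) = Mᵀ * (Nᵀ * A * N) * M := by
    rw [Matrix.transpose_mul]
    simp only [Matrix.mul_assoc]
  rw [e]; exact hC

lemma R_even {A : Matrix (Fin n) (Fin n) ℤ} (h : ∀ i j, (2:ℤ) ∣ A i j) : R A := by
  refine ⟨1, fun _ => false, by simp, ?_, ?_, ?_⟩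
  · intro i hi; simp at hi
  · intro i j _ hij; simp at hij
  · intro i j _ _; simpa using h i j

/-- Splitting off the first basis vector when `A 0 0` is odd. -/
lemma clear (A : Matrix (Fin (n+1)) (Fin (n+1)) ℤ) (hs : ∀ i j, A i j = A j i)
    (hg : Odd (A 0 0)) :
    ∃ N : Matrix (Fin (n+1)) (Fin (n+1)) ℤ, Odd N.det ∧
      (Nᵀ * A * N) 0 0 = A 0 0 ∧
      (∀ j : Fin n, (Nᵀ * A * N) 0 (Fin.succ j) = 0) ∧
      (∀ i : Fin n, (Nᵀ * A * N) (Fin.succ i) 0 = 0) ∧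
      (∀ i j : Fin n, (Nᵀ * A * N) (Fin.succ i) (Fin.succ j) =
        A 0 0 ^ 2 * A (Fin.succ i) (Fin.succ j)
          - A 0 0 * (A 0 (Fin.succ i) * A 0 (Fin.succ j))) := by
  set g := A 0 0 with hgdef
  set N : Matrix (Fin (n+1)) (Fin (n+1)) ℤ :=
    Matrix.of (fun i j => if j = 0 then (if i = 0 then (1:ℤ) else 0)
      else if i = j then g else if i = 0 then -(A 0 j) else 0) with hN
  have hNapp : ∀ i j, N i j = if j = 0 then (if i = 0 then (1:ℤ) else 0)
      else if i = j then g else if i = 0 then -(A 0 j) else 0 := fun i j => rfl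
  -- entry facts about N
  have e00 : N 0 0 = 1 := by rw [hNapp]; simp
  have hcol0 : ∀ l, l ≠ 0 → N l 0 = 0 := by
    intro l hl; rw [hNapp, if_pos rfl, if_neg hl]
  have hcols : ∀ (j : Fin n) (l), l ≠ Fin.succ j → l ≠ 0 → N l (Fin.succ j) = 0 := by
    intro j l h1 h2
    rw [hNapp, if_neg (Fin.succ_ne_zero j), if_neg h1, if_neg h2]
  have hdiag : ∀ j : Fin n, N (Fin.succ j) (Fin.succ j) = g := by
    intro j; rw [hNapp, if_neg (Fin.succ_ne_zero j), if_pos rfl]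
  have h0s : ∀ j : Fin n, N 0 (Fin.succ j) = -(A 0 (Fin.succ j)) := by
    intro j
    rw [hNapp, if_neg (Fin.succ_ne_zero j), if_neg (Fin.succ_ne_zero j).symm, if_pos rfl]
  -- entries of A * N
  have hAN0 : ∀ k, (A * N) k 0 = A k 0 := by
    intro k
    rw [Matrix.mul_apply, sum_one 0 (fun l => A k l) (fun l => N l 0) hcol0, e00, mul_one]
  have hANs : ∀ k (j : Fin n), (A * N) k (Fin.succ j)
      = g * A k (Fin.succ j) - A 0 (Fin.succ j) * A k 0 := by
    intro k j
    rw [Matrix.mul_apply,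
      sum_two (Fin.succ j) 0 (Fin.succ_ne_zero j) (fun l => A k l) (fun l => N l (Fin.succ j))
        (hcols j), hdiag, h0s]
    ring
  -- entries of Nᵀ * A * N
  have hassoc : Nᵀ * A * N = Nᵀ * (A * N) := Matrix.mul_assoc _ _ _
  have hB0 : ∀ j, (Nᵀ * A * N) 0 j = (A * N) 0 j := by
    intro j
    rw [hassoc, Matrix.mul_apply,
      sum_one' 0 (fun k => Nᵀ 0 k) (fun k => (A * N) k j)
        (fun k hk => hcol0 k hk)]
    show Nᵀ 0 0 * _ = _
    rw [Matrix.transpose_apply, e00, one_mul]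
  have hBs : ∀ (i : Fin n) j, (Nᵀ * A * N) (Fin.succ i) j
      = g * (A * N) (Fin.succ i) j - A 0 (Fin.succ i) * (A * N) 0 j := by
    intro i j
    rw [hassoc, Matrix.mul_apply,
      sum_two' (Fin.succ i) 0 (Fin.succ_ne_zero i) (fun k => Nᵀ (Fin.succ i) k)
        (fun k => (A * N) k j)
        (fun k h1 h2 => hcols i k h1 h2)]
    show Nᵀ _ _ * _ + Nᵀ _ _ * _ = _
    rw [Matrix.transpose_apply, Matrix.transpose_apply, hdiag, h0s]
    ring
  -- determinant
  have hdet : Odd N.det := by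
    have htri : N.BlockTriangular id := by
      intro i j hij
      have hij' : (j:ℕ) < (i:ℕ) := hij
      have hji : ¬ i = j := by intro h; subst h; exact lt_irrefl _ hij'
      have hi0 : ¬ i = 0 := by
        intro h; subst h; simp at hij'
      by_cases h0 : j = 0
      · subst h0; rw [hNapp, if_pos rfl, if_neg hi0]
      · rw [hNapp, if_neg h0, if_neg hji, if_neg hi0]
    rw [Matrix.det_of_upperTriangular htri]
    refine Finset.prod_induction _ Odd (fun a b => Odd.mul) odd_one (fun i _ => ?_)
    by_cases h0 : i = 0
    · subst h0; rw [e00]; exact odd_one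
    · rw [hNapp, if_neg, if_pos rfl]
      · exact hg
      · exact h0
  refine ⟨N, hdet, ?_, ?_, ?_, ?_⟩
  · rw [hB0 0, hAN0 0]
  · intro j; rw [hB0 _, hANs 0 j, ← hgdef]; ring
  · intro i; rw [hBs i 0, hAN0, hAN0, hs (Fin.succ i) 0, ← hgdef]; ring
  · intro i j
    rw [hBs i (Fin.succ j), hANs (Fin.succ i) j, hANs 0 j, hs (Fin.succ i) 0, ← hgdef]
    ring

/-- extend a matrix by a 1 in the top-left corner -/
def extend (M : Matrix (Fin n) (Fin n) ℤ) : Matrix (Fin (n+1)) (Fin (n+1)) ℤ :=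
  Matrix.of fun i j =>
    Fin.cases (Fin.cases (1:ℤ) (fun _ => 0) j) (fun i' => Fin.cases 0 (fun j' => M i' j') j) i

@[simp] lemma extend_00 (M : Matrix (Fin n) (Fin n) ℤ) : extend M 0 0 = 1 := rfl
@[simp] lemma extend_0s (M : Matrix (Fin n) (Fin n) ℤ) (j : Fin n) :
    extend M 0 (Fin.succ j) = 0 := by
  show (Fin.cases (1:ℤ) (fun _ => 0) (Fin.succ j) : ℤ) = 0
  simp
@[simp] lemma extend_s0 (M : Matrix (Fin n) (Fin n) ℤ) (i : Fin n) :
    extend M (Fin.succ i) 0 = 0 := by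
  show (Fin.cases 0 (fun j' => M i j') (0 : Fin (n+1)) : ℤ) = 0
  simp
@[simp] lemma extend_ss (M : Matrix (Fin n) (Fin n) ℤ) (i j : Fin n) :
    extend M (Fin.succ i) (Fin.succ j) = M i j := by
  show (Fin.cases 0 (fun j' => M i j') (Fin.succ j) : ℤ) = M i j
  simp

lemma det_extend (M : Matrix (Fin n) (Fin n) ℤ) : (extend M).det = M.det := by
  rw [Matrix.det_succ_column_zero, Fin.sum_univ_succ]
  have h1 : ∀ i : Fin n, (-1:ℤ) ^ ((Fin.succ i : Fin (n+1)) : ℕ) * extend M (Fin.succ i) 0 *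
      ((extend M).submatrix (Fin.succ i).succAbove Fin.succ).det = 0 := by
    intro i; rw [extend_s0]; ring
  rw [Finset.sum_congr rfl (fun i _ => h1 i)]
  have h2 : ((extend M).submatrix Fin.succ Fin.succ) = M := by
    ext i j
    rw [Matrix.submatrix_apply, extend_ss]
  simp [h2]

lemma lift (B : Matrix (Fin (n+1)) (Fin (n+1)) ℤ)
    (h0 : Odd (B 0 0)) (hr : ∀ j : Fin n, B 0 (Fin.succ j) = 0)
    (hc : ∀ i : Fin n, B (Fin.succ i) 0 = 0)
    (h : R (B.submatrix Fin.succ Fin.succ)) : R B := by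
  obtain ⟨M, p, hM, h1, h2, h3⟩ := h
  -- entries of B * extend M
  have hBP0 : ∀ k, (B * extend M) k 0 = B k 0 := by
    intro k
    rw [Matrix.mul_apply, sum_one 0 (fun l => B k l) (fun l => extend M l 0)
      (fun l hl => by
        obtain ⟨l', rfl⟩ := Fin.exists_succ_eq.2 hl
        exact extend_s0 M l')]
    rw [extend_00, mul_one]
  have hBPs : ∀ k (j : Fin n), (B * extend M) k (Fin.succ j)
      = ∑ l', B k (Fin.succ l') * M l' j := by
    intro k j
    rw [Matrix.mul_apply, Fin.sum_univ_succ, extend_0s, mul_zero, zero_add]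
    exact Finset.sum_congr rfl fun l' _ => by rw [extend_ss]
  have hassoc : (extend M)ᵀ * B * extend M = (extend M)ᵀ * (B * extend M) :=
    Matrix.mul_assoc _ _ _
  have htr0s : ∀ i : Fin n, (extend M)ᵀ 0 (Fin.succ i) = 0 := fun i => extend_s0 M i
  have htrs0 : ∀ i : Fin n, (extend M)ᵀ (Fin.succ i) 0 = 0 := fun i => extend_0s M i
  have htr00 : (extend M)ᵀ 0 0 = (1:ℤ) := extend_00 M
  have htrss : ∀ i j : Fin n, (extend M)ᵀ (Fin.succ i) (Fin.succ j) = M j i :=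
    fun i j => extend_ss M j i
  -- entries of Q := (extend M)ᵀ * B * extend M
  have hQ00 : ((extend M)ᵀ * B * extend M) 0 0 = B 0 0 := by
    rw [hassoc, Matrix.mul_apply, Fin.sum_univ_succ, htr00, one_mul, hBP0,
      Finset.sum_congr rfl (fun i _ => by rw [htr0s, zero_mul]),
      Finset.sum_const_zero, add_zero]
  have hQ0s : ∀ j : Fin n, ((extend M)ᵀ * B * extend M) 0 (Fin.succ j) = 0 := by
    intro j
    rw [hassoc, Matrix.mul_apply, Fin.sum_univ_succ,
      Finset.sum_congr rfl (fun i _ => by rw [htr0s, zero_mul]),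
      Finset.sum_const_zero, add_zero, htr00, one_mul, hBPs,
      Finset.sum_congr rfl (fun l' _ => by rw [hr, zero_mul]), Finset.sum_const_zero]
  have hQs0 : ∀ i : Fin n, ((extend M)ᵀ * B * extend M) (Fin.succ i) 0 = 0 := by
    intro i
    rw [hassoc, Matrix.mul_apply, Fin.sum_univ_succ, htrs0, zero_mul, zero_add,
      Finset.sum_congr rfl (fun k _ => by rw [hBP0, hc, mul_zero]), Finset.sum_const_zero]
  have hQss : ∀ i j : Fin n, ((extend M)ᵀ * B * extend M) (Fin.succ i) (Fin.succ j)
      = (Mᵀ * B.submatrix Fin.succ Fin.succ * M) i j := by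
    intro i j
    rw [hassoc, Matrix.mul_apply, Fin.sum_univ_succ, htrs0, zero_mul, zero_add,
      Matrix.mul_assoc, Matrix.mul_apply]
    refine Finset.sum_congr rfl fun k _ => ?_
    rw [htrss, hBPs, Matrix.transpose_apply, Matrix.mul_apply]
    congr 1
  refine ⟨extend M, Fin.cases true p, by rw [det_extend]; exact hM, ?_, ?_, ?_⟩
  · intro i
    induction i using Fin.cases with
    | zero => intro _; rw [hQ00]; exact h0
    | succ i =>
      intro hp
      rw [hQss]
      exact h1 i (by simpa using hp)
  · intro i j hij hp
    induction i using Fin.cases with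
    | zero =>
      induction j using Fin.cases with
      | zero => exact absurd rfl hij
      | succ j => exact hQ0s j
    | succ i =>
      induction j using Fin.cases with
      | zero => exact hQs0 i
      | succ j =>
        rw [hQss]
        refine h2 i j (fun h => hij (by rw [h])) ?_
        simpa using hp
  · intro i j hpi hpj
    induction i using Fin.cases with
    | zero => simp at hpi
    | succ i =>
      induction j using Fin.cases with
      | zero => simp at hpj
      | succ j =>
        rw [hQss]
        exact h3 i j (by simpa using hpi) (by simpa using hpj)

lemma conj_symm {A M : Matrix (Fin n) (Fin n) ℤ} (hs : ∀ i j, A i j = A j i) :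
    ∀ i j, (Mᵀ * A * M) i j = (Mᵀ * A * M) j i := by
  have hA : Aᵀ = A := Matrix.ext fun i j => hs j i
  have hX : (Mᵀ * A * M)ᵀ = Mᵀ * A * M := by
    rw [Matrix.transpose_mul, Matrix.transpose_mul, Matrix.transpose_transpose, hA,
      Matrix.mul_assoc]
  intro i j
  conv_lhs => rw [← hX]
  rfl

lemma R_perm (A : Matrix (Fin n) (Fin n) ℤ) (e : Equiv.Perm (Fin n))
    (h : R (A.submatrix ⇑e ⇑e)) : R A := by
  set P : Matrix (Fin n) (Fin n) ℤ :=
    Matrix.of (fun a b => if a = e b then (1:ℤ) else 0) with hP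
  have hPapp : ∀ a b, P a b = if a = e b then (1:ℤ) else 0 := fun a b => rfl
  have hPcol : ∀ (j l : Fin n), l ≠ e j → P l j = 0 := by
    intro j l hl; rw [hPapp, if_neg hl]
  have hProw : ∀ (a k : Fin n), k ≠ e.symm a → P a k = 0 := by
    intro a k hk
    rw [hPapp, if_neg (fun hh => hk (by rw [hh, Equiv.symm_apply_apply]))]
  have hPtcol : ∀ (i k : Fin n), k ≠ e i → Pᵀ i k = 0 := by
    intro i k hk
    show P k i = 0
    exact hPcol i k hk
  have hAP : ∀ k j, (A * P) k j = A k (e j) := by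
    intro k j
    rw [Matrix.mul_apply, sum_one (e j) (fun l => A k l) (fun l => P l j) (hPcol j)]
    rw [hPapp, if_pos rfl, mul_one]
  have hconj : Pᵀ * A * P = A.submatrix ⇑e ⇑e := by
    ext i j
    rw [Matrix.mul_assoc, Matrix.mul_apply,
      sum_one' (e i) (fun k => Pᵀ i k) (fun k => (A * P) k j) (hPtcol i)]
    show P (e i) i * _ = _
    rw [hPapp, if_pos rfl, one_mul, hAP, Matrix.submatrix_apply]
  have hdet : Odd P.det := by
    have hPPt : P * Pᵀ = 1 := by
      ext a b
      rw [Matrix.mul_apply,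
        sum_one' (e.symm a) (fun k => P a k) (fun k => Pᵀ k b) (hProw a)]
      have key : e (e.symm a) = a := e.apply_symm_apply a
      show P a (e.symm a) * P b (e.symm a) = _
      rw [hPapp, if_pos key.symm, one_mul, hPapp, key, Matrix.one_apply]
      by_cases hab : a = b
      · subst hab; simp
      · rw [if_neg (fun h => hab h.symm), if_neg hab]
    have hu : IsUnit P.det := by
      refine IsUnit.of_mul_eq_one Pᵀ.det ?_
      rw [← Matrix.det_mul, hPPt, Matrix.det_one]
    rcases Int.isUnit_iff.1 hu with h1 | h1 <;> rw [h1]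
    · exact odd_one
    · exact ⟨-1, by ring⟩
  exact R_comp hdet (by rw [hconj]; exact h)

/-- adding basis vector `k+1` to basis vector `0` -/
lemma addRow (B : Matrix (Fin (n+1)) (Fin (n+1)) ℤ) (k : Fin n) :
    ∃ M₂ : Matrix (Fin (n+1)) (Fin (n+1)) ℤ, Odd M₂.det ∧
      (M₂ᵀ * B * M₂) 0 0
        = B 0 0 + B 0 (Fin.succ k) + B (Fin.succ k) 0 + B (Fin.succ k) (Fin.succ k) ∧
      (∀ j : Fin n, (M₂ᵀ * B * M₂) 0 (Fin.succ j) = B 0 (Fin.succ j) + B (Fin.succ k) (Fin.succ j)) ∧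
      (∀ i j : Fin n, (M₂ᵀ * B * M₂) (Fin.succ i) (Fin.succ j) = B (Fin.succ i) (Fin.succ j)) := by
  set M₂ : Matrix (Fin (n+1)) (Fin (n+1)) ℤ :=
    Matrix.of (fun a b => if a = b then (1:ℤ) else if a = Fin.succ k ∧ b = 0 then 1 else 0)
    with hM₂
  have happ : ∀ a b, M₂ a b = if a = b then (1:ℤ) else if a = Fin.succ k ∧ b = 0 then 1 else 0 :=
    fun a b => rfl
  have hcol0 : ∀ l : Fin (n+1), l ≠ 0 → l ≠ Fin.succ k → M₂ l 0 = 0 := by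
    intro l h1 h2; rw [happ, if_neg h1, if_neg (fun hh => h2 hh.1)]
  have hcols : ∀ (j : Fin n) (l), l ≠ Fin.succ j → M₂ l (Fin.succ j) = 0 := by
    intro j l hl; rw [happ, if_neg hl, if_neg (fun hh => (Fin.succ_ne_zero j) hh.2)]
  have hBM0 : ∀ a, (B * M₂) a 0 = B a 0 + B a (Fin.succ k) := by
    intro a
    rw [Matrix.mul_apply, sum_two 0 (Fin.succ k) (Fin.succ_ne_zero k).symm
      (fun l => B a l) (fun l => M₂ l 0) hcol0]
    rw [happ, if_pos rfl, happ, if_neg (Fin.succ_ne_zero k), if_pos ⟨rfl, rfl⟩]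
    ring
  have hBMs : ∀ a (j : Fin n), (B * M₂) a (Fin.succ j) = B a (Fin.succ j) := by
    intro a j
    rw [Matrix.mul_apply, sum_one (Fin.succ j) (fun l => B a l) (fun l => M₂ l (Fin.succ j))
      (hcols j)]
    rw [happ, if_pos rfl, mul_one]
  have hassoc : M₂ᵀ * B * M₂ = M₂ᵀ * (B * M₂) := Matrix.mul_assoc _ _ _
  have htcol0 : ∀ a : Fin (n+1), a ≠ 0 → a ≠ Fin.succ k → M₂ᵀ 0 a = 0 := by
    intro a h1 h2
    show M₂ a 0 = 0
    exact hcol0 a h1 h2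
  have htcols : ∀ (i : Fin n) (a), a ≠ Fin.succ i → M₂ᵀ (Fin.succ i) a = 0 := by
    intro i a ha
    show M₂ a (Fin.succ i) = 0
    exact hcols i a ha
  have hQ0 : ∀ j, (M₂ᵀ * B * M₂) 0 j = (B * M₂) 0 j + (B * M₂) (Fin.succ k) j := by
    intro j
    rw [hassoc, Matrix.mul_apply, sum_two' 0 (Fin.succ k) (Fin.succ_ne_zero k).symm
      (fun a => M₂ᵀ 0 a) (fun a => (B * M₂) a j) htcol0]
    show M₂ 0 0 * _ + M₂ (Fin.succ k) 0 * _ = _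
    rw [happ, if_pos rfl, happ, if_neg (Fin.succ_ne_zero k), if_pos ⟨rfl, rfl⟩]
    ring
  have hQs : ∀ (i : Fin n) j, (M₂ᵀ * B * M₂) (Fin.succ i) j = (B * M₂) (Fin.succ i) j := by
    intro i j
    rw [hassoc, Matrix.mul_apply, sum_one' (Fin.succ i)
      (fun a => M₂ᵀ (Fin.succ i) a) (fun a => (B * M₂) a j) (htcols i)]
    show M₂ (Fin.succ i) (Fin.succ i) * _ = _
    rw [happ, if_pos rfl, one_mul]
  have hdet : Odd M₂.det := by
    have htri : M₂.BlockTriangular OrderDual.toDual := by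
      intro i j hij
      have hij' : (i:ℕ) < (j:ℕ) := hij
      have h1 : ¬ i = j := by intro h; subst h; exact lt_irrefl _ hij'
      have h2 : ¬ j = 0 := by
        intro h; subst h; simp at hij'
      rw [happ, if_neg h1, if_neg (fun hh => h2 hh.2)]
    rw [Matrix.det_of_lowerTriangular _ htri]
    refine Finset.prod_induction _ Odd (fun a b => Odd.mul) odd_one (fun i _ => ?_)
    rw [happ, if_pos rfl]; exact odd_one
  refine ⟨M₂, hdet, ?_, ?_, ?_⟩
  · rw [hQ0 0, hBM0, hBM0]; ring
  · intro j; rw [hQ0 _, hBMs, hBMs]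
  · intro i j; rw [hQs, hBMs]

/-- the main induction -/
lemma main : ∀ (N : ℕ) (A : Matrix (Fin N) (Fin N) ℤ), (∀ i j, A i j = A j i) →
    ((∃ i, Odd (A i i)) ∨ (∀ i j, (2:ℤ) ∣ A i j)) → R A := by
  intro N
  induction N with
  | zero =>
    intro A _ _
    exact ⟨1, fun _ => false, by rw [Matrix.det_one]; exact odd_one,
      fun i => i.elim0, fun i => i.elim0, fun i => i.elim0⟩
  | succ m IH =>
    intro A hs hgood
    rcases hgood with ⟨i0, hi0⟩ | heven
    swap
    · exact R_even heven
    -- move the odd diagonal entry to position 0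
    refine R_perm A (Equiv.swap 0 i0) ?_
    set e := Equiv.swap (0 : Fin (m+1)) i0 with he
    have hs₁ : ∀ i j, (A.submatrix ⇑e ⇑e) i j = (A.submatrix ⇑e ⇑e) j i := fun i j => hs _ _
    have h00 : Odd ((A.submatrix ⇑e ⇑e) 0 0) := by
      rw [Matrix.submatrix_apply, he, Equiv.swap_apply_left]
      exact hi0
    set A₁ := A.submatrix ⇑e ⇑e with hA₁
    clear_value A₁
    clear hi0 he hA₁
    -- now: A₁ symmetric with A₁ 0 0 odd; prove R A₁
    obtain ⟨N₁, hN₁det, hB00, hBr, hBc, hBf⟩ := clear A₁ hs₁ h00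
    refine R_comp hN₁det ?_
    set B := N₁ᵀ * A₁ * N₁ with hB
    have hBsymm : ∀ i j, B i j = B j i := conj_symm hs₁
    have hA'f : ∀ i j, (B.submatrix Fin.succ Fin.succ) i j
        = A₁ 0 0 ^ 2 * A₁ (Fin.succ i) (Fin.succ j)
          - A₁ 0 0 * (A₁ 0 (Fin.succ i) * A₁ 0 (Fin.succ j)) := fun i j => hBf i j
    have hA's : ∀ i j, (B.submatrix Fin.succ Fin.succ) i j
        = (B.submatrix Fin.succ Fin.succ) j i := fun i j => hBsymm _ _
    by_cases hgood' : (∃ i, Odd ((B.submatrix Fin.succ Fin.succ) i i)) ∨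
        (∀ i j, (2:ℤ) ∣ (B.submatrix Fin.succ Fin.succ) i j)
    · exact lift B (hB00 ▸ h00) hBr hBc (IH _ hA's hgood')
    · push_neg at hgood'
      obtain ⟨hdiagE, k, l, hkl⟩ := hgood'
      have hdiagEven : ∀ i, Even ((B.submatrix Fin.succ Fin.succ) i i) :=
        fun i => Int.not_odd_iff_even.mp (hdiagE i)
      have hklOdd : Odd ((B.submatrix Fin.succ Fin.succ) k l) := by
        rcases Int.even_or_odd ((B.submatrix Fin.succ Fin.succ) k l) with h | h
        · exact absurd h.two_dvd hkl
        · exact h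
      obtain ⟨M₂, hM₂det, hQ00, hQ0s, hQss⟩ := addRow B k
      refine R_comp hM₂det ?_
      set B₂ := M₂ᵀ * B * M₂ with hB₂
      have hB₂symm : ∀ i j, B₂ i j = B₂ j i := conj_symm hBsymm
      have hB₂00 : Odd (B₂ 0 0) := by
        rw [hQ00, hBr, hBc, hB00]
        have : A₁ 0 0 + 0 + 0 + B (Fin.succ k) (Fin.succ k)
            = A₁ 0 0 + B (Fin.succ k) (Fin.succ k) := by ring
        rw [this]
        exact h00.add_even (hdiagEven k)
      obtain ⟨N₂, hN₂det, hC00, hCr, hCc, hCf⟩ := clear B₂ hB₂symm hB₂00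
      refine R_comp hN₂det ?_
      set C := N₂ᵀ * B₂ * N₂ with hC
      have hCsymm : ∀ i j, C i j = C j i := conj_symm hB₂symm
      have hA''s : ∀ i j, (C.submatrix Fin.succ Fin.succ) i j
          = (C.submatrix Fin.succ Fin.succ) j i := fun i j => hCsymm _ _
      have hA''odd : Odd ((C.submatrix Fin.succ Fin.succ) l l) := by
        have h1 : (C.submatrix Fin.succ Fin.succ) l l
            = B₂ 0 0 ^ 2 * B₂ (Fin.succ l) (Fin.succ l)
              - B₂ 0 0 * (B₂ 0 (Fin.succ l) * B₂ 0 (Fin.succ l)) := hCf l l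
        have h2 : B₂ (Fin.succ l) (Fin.succ l) = B (Fin.succ l) (Fin.succ l) := hQss l l
        have h3 : B₂ 0 (Fin.succ l) = B 0 (Fin.succ l) + B (Fin.succ k) (Fin.succ l) := hQ0s l
        rw [h1, h2, h3, hBr]
        have h4 : Odd (0 + B (Fin.succ k) (Fin.succ l)) := by
          rw [zero_add]; exact hklOdd
        exact Even.sub_odd ((hdiagEven l).mul_left _) (hB₂00.mul (h4.mul h4))
      exact lift C (hC00 ▸ hB₂00) hCr hCc (IH _ hA''s (Or.inl ⟨l, hA''odd⟩))

end OddLatticeAux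

open OddLatticeAux in
/-- If a nondegenerate integral lattice is odd (some diagonal entry of
its Gram matrix `G` is odd), then it contains a sublattice of odd index with Gram
matrix the block diagonal sum of a diagonal matrix `G₁` with odd diagonal entries
and twice a symmetric integer matrix `G₂`. -/
theorem exists_odd_index_sublattice_splitting_of_odd_lattice
    {n : ℕ} (G : Matrix (Fin n) (Fin n) ℤ) (hG : G.IsSymm) (hdet : G.det ≠ 0)
    (hodd : ∃ i, Odd (G i i)) :
    ∃ (n₂ : ℕ) (_ : n₂ ≤ n) (M : Matrix (Fin n) (Fin n) ℤ)
      (d₁ : Fin n₂ → ℤ)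
      (G₂ : Matrix (Fin (n - n₂)) (Fin (n - n₂)) ℤ)
      (e : Fin n ≃ (Fin n₂ ⊕ Fin (n - n₂))),
      Odd M.det ∧ (∀ i, Odd (d₁ i)) ∧ G₂.IsSymm ∧
        Mᵀ * G * M =
          (Matrix.fromBlocks (Matrix.diagonal d₁) 0 0 ((2 : ℤ) • G₂)).submatrix e e := by
  have hGs : ∀ i j, G i j = G j i := fun i j => by
    conv_lhs => rw [← hG]
    rfl
  obtain ⟨M, p, hM, h1, h2, h3⟩ := main n G hGs (Or.inl hodd)
  set C := Mᵀ * G * M with hC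
  have hCsymm : ∀ i j, C i j = C j i := conj_symm hGs
  set n₂ := (Finset.univ.filter (fun i => p i = true)).card with hn₂
  have hle : n₂ ≤ n := by
    rw [hn₂]
    calc (Finset.univ.filter (fun i => p i = true)).card
        ≤ (Finset.univ : Finset (Fin n)).card := Finset.card_filter_le _ _
      _ = n := Finset.card_fin n
  have hcard1 : Fintype.card {i : Fin n // p i = true} = n₂ := by
    rw [Fintype.card_subtype]
  have hcard2 : Fintype.card {i : Fin n // ¬ (p i = true)} = n - n₂ := by
    rw [Fintype.card_subtype_compl, hcard1, Fintype.card_fin]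
  set e₁ : {i : Fin n // p i = true} ≃ Fin n₂ := Fintype.equivFinOfCardEq hcard1 with he₁
  set e₂ : {i : Fin n // ¬ (p i = true)} ≃ Fin (n - n₂) := Fintype.equivFinOfCardEq hcard2
    with he₂
  set e : Fin n ≃ Fin n₂ ⊕ Fin (n - n₂) :=
    (Equiv.sumCompl (fun i => p i = true)).symm.trans (Equiv.sumCongr e₁ e₂) with he
  have hel : ∀ (i : Fin n) (h : p i = true), e i = Sum.inl (e₁ ⟨i, h⟩) := by
    intro i h
    rw [he, Equiv.trans_apply, Equiv.sumCompl_symm_apply_of_pos (p := fun j => p j = true) (a := i) h]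
    rfl
  have her : ∀ (i : Fin n) (h : ¬ p i = true), e i = Sum.inr (e₂ ⟨i, h⟩) := by
    intro i h
    rw [he, Equiv.trans_apply, Equiv.sumCompl_symm_apply_of_neg (p := fun j => p j = true) (a := i) h]
    rfl
  have hpl : ∀ a : Fin n₂, p (e.symm (Sum.inl a)) = true := by
    intro a
    by_contra hcon
    have h' := her _ hcon
    rw [Equiv.apply_symm_apply] at h'
    simp at h'
  have hpr : ∀ b : Fin (n - n₂), p (e.symm (Sum.inr b)) = false := by
    intro b
    rcases hpb : p (e.symm (Sum.inr b)) with _ | _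
    · rfl
    · have h' := hel _ hpb
      rw [Equiv.apply_symm_apply] at h'
      simp at h'
  set d₁ : Fin n₂ → ℤ := fun a => C (e.symm (Sum.inl a)) (e.symm (Sum.inl a)) with hd₁
  set G₂ : Matrix (Fin (n - n₂)) (Fin (n - n₂)) ℤ :=
    Matrix.of (fun a b => C (e.symm (Sum.inr a)) (e.symm (Sum.inr b)) / 2) with hG₂
  have hG₂app : ∀ a b, G₂ a b = C (e.symm (Sum.inr a)) (e.symm (Sum.inr b)) / 2 :=
    fun a b => rfl
  refine ⟨n₂, hle, M, d₁, G₂, e, hM, ?_, ?_, ?_⟩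
  · intro a
    exact h1 _ (hpl a)
  · apply Matrix.ext
    intro a b
    rw [Matrix.transpose_apply, hG₂app, hG₂app, hCsymm]
  · apply Matrix.ext
    intro i j
    rw [Matrix.submatrix_apply]
    rcases hei : e i with a | a <;> rcases hej : e j with b | b
    · -- both in the odd-diagonal block
      have hi : e.symm (Sum.inl a) = i := (Equiv.symm_apply_eq e).mpr hei.symm
      have hpi : p i = true := by have := hpl a; rwa [hi] at this
      rw [Matrix.fromBlocks_apply₁₁]
      by_cases hab : a = b
      · subst hab
        have hij : i = j := e.injective (by rw [hei, hej])
        subst hij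
        rw [Matrix.diagonal_apply_eq]
        show C i i = C (e.symm (Sum.inl a)) (e.symm (Sum.inl a))
        rw [hi]
      · have hij : i ≠ j := by
          intro hh; subst hh; rw [hei] at hej; exact hab (Sum.inl.inj hej)
        rw [Matrix.diagonal_apply_ne _ hab]
        exact h2 i j hij (Or.inl hpi)
    · have hi : e.symm (Sum.inl a) = i := (Equiv.symm_apply_eq e).mpr hei.symm
      have hpi : p i = true := by have := hpl a; rwa [hi] at this
      have hij : i ≠ j := by
        intro hh; subst hh; rw [hei] at hej; exact Sum.inl_ne_inr hej
      rw [Matrix.fromBlocks_apply₁₂]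
      exact (h2 i j hij (Or.inl hpi)).trans rfl
    · have hj : e.symm (Sum.inl b) = j := (Equiv.symm_apply_eq e).mpr hej.symm
      have hpj : p j = true := by have := hpl b; rwa [hj] at this
      have hij : i ≠ j := by
        intro hh; subst hh; rw [hei] at hej; exact Sum.inr_ne_inl hej
      rw [Matrix.fromBlocks_apply₂₁]
      exact (h2 i j hij (Or.inr hpj)).trans rfl
    · -- both in the even block
      have hi : e.symm (Sum.inr a) = i := (Equiv.symm_apply_eq e).mpr hei.symm
      have hj : e.symm (Sum.inr b) = j := (Equiv.symm_apply_eq e).mpr hej.symm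
      have hpi : p i = false := by have := hpr a; rwa [hi] at this
      have hpj : p j = false := by have := hpr b; rwa [hj] at this
      rw [Matrix.fromBlocks_apply₂₂, Matrix.smul_apply, smul_eq_mul]
      show C i j = 2 * (C (e.symm (Sum.inr a)) (e.symm (Sum.inr b)) / 2)
      rw [hi, hj]
      exact (Int.mul_ediv_cancel' (h3 i j hpi hpj)).symm
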